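/- arXiv:1809.07511 — 2 statements merged into one kernel-verified Lean document; each statement's English description precedes it below -/
import Mathlib

section
/- Let n ≥ 2, let a_0(n), a_1(n) be real numbers with 2a_0(n) + a_1(n) = 1, let f : [0,1] → ℝ be continuous, and let x ∈ [0,1]. Set σ_n(x) = [2n x(1−x) + (1−2x)²](n−1)/(2n²(n+1)), so that σ_n(x) ≤ 1/(4n). Then |U_n^{M,1}(f;x) − f(x)| ≤ |U_n(f;x) − f(x)| + |(1 + a_1(n))(1/2 − x)|·{ 3·ω₂(f; √σ_n(x)) + (5/(n√σ_n(x)))·ω₁(f; √σ_n(x)) }. -/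
open scoped BigOperators
open Set Filter MeasureTheory

/-- Bernstein fundamental function `p_{n,k}` (vanishes for `k > n` since `choose = 0`). -/
noncomputable def bp (n k : ℕ) (x : ℝ) : ℝ :=
  (n.choose k : ℝ) * x ^ k * (1 - x) ^ (n - k)

/-- Bernstein fundamental function with integer index, vanishing for negative `k`. -/
noncomputable def bpz (n : ℕ) (k : ℤ) (x : ℝ) : ℝ :=
  if 0 ≤ k then bp n k.toNat x else 0

/-- The classical Bernstein operator `B_n`. -/
noncomputable def Bern (n : ℕ) (f : ℝ → ℝ) (x : ℝ) : ℝ :=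
  ∑ k ∈ Finset.range (n + 1), bp n k x * f (k / n)

/-- Modified fundamental function `p_{n,k}^{M,1}` with `a(x,n) = a1*x + a0`. -/
noncomputable def bpM1 (a0 a1 : ℝ) (n k : ℕ) (x : ℝ) : ℝ :=
  (a1 * x + a0) * bp (n - 1) k x + (a1 * (1 - x) + a0) * bpz (n - 1) ((k : ℤ) - 1) x

/-- The modified Bernstein operator `B_n^{M,1}`. -/
noncomputable def BernM1 (a0 a1 : ℝ) (n : ℕ) (f : ℝ → ℝ) (x : ℝ) : ℝ :=
  ∑ k ∈ Finset.range (n + 1), bpM1 a0 a1 n k x * f (k / n)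

/-- Second modified fundamental function `p_{n,k}^{M,2}`. -/
noncomputable def bpM2 (n k : ℕ) (x : ℝ) : ℝ :=
  ((n : ℝ) / 2 * x ^ 2 + (-1 - (n : ℝ) / 2) * x + 1) * bp (n - 2) k x
    + (n : ℝ) * x * (1 - x) * bpz (n - 2) ((k : ℤ) - 1) x
    + ((n : ℝ) / 2 * x ^ 2 + (-(n : ℝ) / 2 + 1) * x) * bpz (n - 2) ((k : ℤ) - 2) x

/-- The second modified Bernstein operator `B_n^{M,2}`. -/
noncomputable def BernM2 (n : ℕ) (f : ℝ → ℝ) (x : ℝ) : ℝ :=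
  ∑ k ∈ Finset.range (n + 1), bpM2 n k x * f (k / n)

/-- The Kantorovich operator `K_n`. -/
noncomputable def Kan (n : ℕ) (f : ℝ → ℝ) (x : ℝ) : ℝ :=
  ((n : ℝ) + 1) * ∑ k ∈ Finset.range (n + 1),
    bp n k x * ∫ t in ((k : ℝ) / (n + 1))..(((k : ℝ) + 1) / (n + 1)), f t

/-- The modified Kantorovich operator `K_n^{M,1}`. -/
noncomputable def KanM1 (a0 a1 : ℝ) (n : ℕ) (f : ℝ → ℝ) (x : ℝ) : ℝ :=
  ((n : ℝ) + 1) * ∑ k ∈ Finset.range (n + 1),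
    bpM1 a0 a1 n k x * ∫ t in ((k : ℝ) / (n + 1))..(((k : ℝ) + 1) / (n + 1)), f t

/-- The Durrmeyer operator `D_n`. -/
noncomputable def Dur (n : ℕ) (f : ℝ → ℝ) (x : ℝ) : ℝ :=
  ((n : ℝ) + 1) * ∑ k ∈ Finset.range (n + 1),
    bp n k x * ∫ t in (0:ℝ)..1, bp n k t * f t

/-- The modified Durrmeyer operator `D_n^{M,1}`. -/
noncomputable def DurM1 (a0 a1 : ℝ) (n : ℕ) (f : ℝ → ℝ) (x : ℝ) : ℝ :=
  ((n : ℝ) + 1) * ∑ k ∈ Finset.range (n + 1),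
    bpM1 a0 a1 n k x * ∫ t in (0:ℝ)..1, bp n k t * f t

/-- The genuine Bernstein–Durrmeyer operator `U_n`. -/
noncomputable def Gen (n : ℕ) (f : ℝ → ℝ) (x : ℝ) : ℝ :=
  (1 - x) ^ n * f 0 + x ^ n * f 1 +
    ((n : ℝ) - 1) * ∑ k ∈ Finset.Icc 1 (n - 1),
      bp n k x * ∫ t in (0:ℝ)..1, bp (n - 2) (k - 1) t * f t

/-- The modified genuine Bernstein–Durrmeyer operator `U_n^{M,1}`. -/
noncomputable def GenM1 (a0 a1 : ℝ) (n : ℕ) (f : ℝ → ℝ) (x : ℝ) : ℝ :=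
  (a1 * x + a0) * (1 - x) ^ (n - 1) * f 0 + (a1 * (1 - x) + a0) * x ^ (n - 1) * f 1 +
    ((n : ℝ) - 1) * ∑ k ∈ Finset.Icc 1 (n - 1),
      bpM1 a0 a1 n k x * ∫ t in (0:ℝ)..1, bp (n - 2) (k - 1) t * f t

/-- First modulus of continuity on `[0,1]`. -/
noncomputable def omega1 (f : ℝ → ℝ) (δ : ℝ) : ℝ :=
  sSup {y | ∃ s t : ℝ, s ∈ Icc (0:ℝ) 1 ∧ t ∈ Icc (0:ℝ) 1 ∧ |s - t| ≤ δ ∧ y = |f s - f t|}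

/-- Second modulus of smoothness on `[0,1]`. -/
noncomputable def omega2 (f : ℝ → ℝ) (δ : ℝ) : ℝ :=
  sSup {y | ∃ t h : ℝ, 0 < h ∧ h ≤ δ ∧ t - h ∈ Icc (0:ℝ) 1 ∧ t + h ∈ Icc (0:ℝ) 1 ∧
    y = |f (t + h) - 2 * f t + f (t - h)|}

/-- Sup norm on `[0,1]`. -/
noncomputable def supNorm (g : ℝ → ℝ) : ℝ :=
  sSup {y | ∃ t ∈ Icc (0:ℝ) 1, y = |g t|}

lemma bp_continuous (m k : ℕ) : Continuous (bp m k) := by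
  unfold bp; fun_prop

lemma bpz_continuous (m : ℕ) (k : ℤ) : Continuous (bpz m k) := by
  unfold bpz; split
  · exact bp_continuous _ _
  · exact continuous_const

lemma bp_nonneg {m k : ℕ} {x : ℝ} (h0 : 0 ≤ x) (h1 : x ≤ 1) : 0 ≤ bp m k x := by
  unfold bp
  have : (0:ℝ) ≤ 1 - x := by linarith
  positivity

lemma bp_zero_of_lt {m k : ℕ} (h : m < k) (x : ℝ) : bp m k x = 0 := by
  simp [bp, Nat.choose_eq_zero_of_lt h]

lemma bpz_ofNat (m k : ℕ) : bpz m ((k:ℤ)) = bp m k := by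
  funext x; simp [bpz]

lemma bpz_coe_sub_one (m : ℕ) (k : ℕ) (hk : 1 ≤ k) :
    bpz m ((k:ℤ) - 1) = bp m (k-1) := by
  obtain ⟨i, rfl⟩ := Nat.exists_eq_add_of_le hk
  have h1 : ((1 + i : ℕ) : ℤ) - 1 = (i : ℤ) := by push_cast; ring
  have h2 : 1 + i - 1 = i := by omega
  rw [h1, h2, bpz_ofNat]

lemma bp_at_zero (m k : ℕ) : bp m k 0 = if k = 0 then 1 else 0 := by
  rcases k with _ | k
  · simp [bp]
  · simp [bp]

lemma bp_at_one (m k : ℕ) : bp m k 1 = if k = m then 1 else 0 := by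
  rcases eq_or_ne k m with rfl | h
  · simp [bp]
  · rcases lt_or_gt_of_ne h with h' | h'
    · have : m - k ≠ 0 := by omega
      simp [bp, h, zero_pow this]
    · simp [bp, h, Nat.choose_eq_zero_of_lt h']

lemma bp_sum (m : ℕ) (x : ℝ) : ∑ k ∈ Finset.range (m+1), bp m k x = 1 := by
  have h := add_pow x (1-x) m
  simp only [add_sub_cancel, one_pow] at h
  have h2 : ∑ k ∈ Finset.range (m+1), bp m k x
      = ∑ k ∈ Finset.range (m+1), x ^ k * (1-x) ^ (m-k) * (m.choose k : ℝ) :=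
    Finset.sum_congr rfl fun k _ => by unfold bp; ring
  rw [h2, ← h]

lemma choose_id2 (m j : ℕ) : (m + 1 - j) * Nat.choose (m+1) j = (m+1) * Nat.choose m j := by
  rcases le_or_gt j (m+1) with h | h
  · rcases Nat.eq_or_lt_of_le h with rfl | h'
    · simp [Nat.choose_eq_zero_of_lt (Nat.lt_succ_self m)]
    · have hjm : j ≤ m := by omega
      set k := m + 1 - j with hk
      have hk1 : 1 ≤ k := by omega
      have hkk : k - 1 + 1 = k := by omega
      have h1 : Nat.choose (m+1) j = Nat.choose (m+1) k := by
        rw [hk, Nat.choose_symm h]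
      have h2 : (m+1) * Nat.choose m (k-1) = Nat.choose (m+1) k * k := by
        have := Nat.add_one_mul_choose_eq m (k-1)
        simpa [Nat.succ_eq_add_one, hkk] using this
      have h3 : Nat.choose m (k-1) = Nat.choose m j := by
        have : k - 1 = m - j := by omega
        rw [this, Nat.choose_symm hjm]
      rw [h1, mul_comm, ← h2, h3]
  · have h1 : Nat.choose (m+1) j = 0 := Nat.choose_eq_zero_of_lt h
    have h2 : Nat.choose m j = 0 := Nat.choose_eq_zero_of_lt (by omega)
    simp [h1, h2]

lemma bp_hasDerivAt (m j : ℕ) (t : ℝ) :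
    HasDerivAt (bp (m+1) j) (((m:ℝ)+1) * (bpz m ((j:ℤ)-1) t - bp m j t)) t := by
  have h1 : HasDerivAt (fun t : ℝ => t ^ j) ((j:ℝ) * t ^ (j-1)) t := hasDerivAt_pow j t
  have h2 : HasDerivAt (fun t : ℝ => (1-t) ^ (m+1-j))
      (((m+1-j : ℕ):ℝ) * (1-t) ^ (m+1-j-1) * (-1)) t := by
    have hin : HasDerivAt (fun t : ℝ => 1 - t) (-1) t := (hasDerivAt_id t).const_sub 1
    exact (hasDerivAt_pow (m+1-j) (1-t)).comp t hin
  have h3 : HasDerivAt (fun t : ℝ => ((m+1).choose j : ℝ) * t ^ j * (1-t) ^ (m+1-j))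
      ((((m+1).choose j : ℝ) * ((j:ℝ) * t ^ (j-1))) * (1-t)^(m+1-j)
        + (((m+1).choose j : ℝ) * t ^ j) * (((m+1-j : ℕ):ℝ) * (1-t) ^ (m+1-j-1) * (-1))) t :=
    (h1.const_mul _).mul h2
  have heq : bp (m+1) j = fun t : ℝ => ((m+1).choose j : ℝ) * t ^ j * (1-t) ^ (m+1-j) := rfl
  rw [heq]
  convert h3 using 1
  rcases j with _ | i
  · have hz : bpz m (((0:ℕ):ℤ) - 1) t = 0 := by simp [bpz]
    rw [hz]
    simp only [bp, Nat.choose_zero_right, Nat.cast_one, pow_zero, Nat.sub_zero, Nat.cast_zero,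
      Nat.add_sub_cancel, Nat.cast_ofNat, Nat.cast_add]
    push_cast
    ring
  · rw [bpz_coe_sub_one m (i+1) (by omega)]
    have hsub0 : i + 1 - 1 = i := by omega
    have hsub1 : m + 1 - (i+1) = m - i := by omega
    have hsub2 : m + 1 - (i+1) - 1 = m - (i+1) := by omega
    have hsub3 : m - i - 1 = m - (i+1) := by omega
    have e1' : (m+1) * m.choose i = (m+1).choose (i+1) * (i+1) := by
      simpa [Nat.succ_eq_add_one] using Nat.add_one_mul_choose_eq m i
    have e1 : ((m+1).choose (i+1) : ℝ) * ((i:ℝ)+1) = ((m:ℝ)+1) * (m.choose i : ℝ) := by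
      have := congrArg (Nat.cast : ℕ → ℝ) e1'
      push_cast at this
      linarith
    have e2' : (m - i) * Nat.choose (m+1) (i+1) = (m+1) * Nat.choose m (i+1) := by
      have := choose_id2 m (i+1)
      rwa [hsub1] at this
    have e2 : ((m - i : ℕ) : ℝ) * ((m+1).choose (i+1) : ℝ)
        = ((m:ℝ)+1) * (m.choose (i+1) : ℝ) := by
      have := congrArg (Nat.cast : ℕ → ℝ) e2'
      push_cast at this
      convert this using 2 <;> push_cast <;> ring
    simp only [bp, hsub0, hsub1, hsub2, hsub3]
    push_cast
    linear_combination (-(t^i * (1-t)^(m-i))) * e1 + (t^(i+1) * (1-t)^(m-(i+1))) * e2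

lemma bp_intervalIntegrable (m k : ℕ) (a b : ℝ) (g : ℝ → ℝ) (hg : ContinuousOn g (Set.uIcc a b)) :
    IntervalIntegrable (fun t => bp m k t * g t) MeasureTheory.volume a b :=
  (((bp_continuous m k).continuousOn).mul hg).intervalIntegrable

lemma bp_integral {m k : ℕ} (hk : k ≤ m) : ∫ t in (0:ℝ)..1, bp m k t = 1/((m:ℝ)+1) := by
  set Q : ℝ → ℝ := fun t => ∑ i ∈ Finset.range (m+1-k), bp (m+1) (k+(i+1)) t with hQ
  have hQd : ∀ t : ℝ, HasDerivAt Q (((m:ℝ)+1) * bp m k t) t := by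
    intro t
    have h1 : HasDerivAt Q (∑ i ∈ Finset.range (m+1-k),
        ((m:ℝ)+1) * (bpz m (((k+(i+1) : ℕ):ℤ)-1) t - bp m (k+(i+1)) t)) t :=
      HasDerivAt.fun_sum fun i _ => bp_hasDerivAt m (k+(i+1)) t
    convert h1 using 1
    have h2 : ∀ i : ℕ, bpz m (((k+(i+1) : ℕ):ℤ)-1) t = bp m (k+i) t := by
      intro i
      rw [bpz_coe_sub_one m (k+(i+1)) (by omega)]
      have h9 : k+(i+1)-1 = k+i := by omega
      rw [h9]
    have h3 : (∑ i ∈ Finset.range (m+1-k),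
        ((m:ℝ)+1) * (bpz m (((k+(i+1) : ℕ):ℤ)-1) t - bp m (k+(i+1)) t))
        = ((m:ℝ)+1) * ∑ i ∈ Finset.range (m+1-k), (bp m (k+i) t - bp m (k+(i+1)) t) := by
      rw [Finset.mul_sum]
      exact Finset.sum_congr rfl fun i _ => by rw [h2 i]
    rw [h3, Finset.sum_range_sub' (fun i => bp m (k+i) t)]
    have h4 : k + (m+1-k) = m+1 := by omega
    simp [h4, bp_zero_of_lt (Nat.lt_succ_self m)]
  have hInt : IntervalIntegrable (fun t => ((m:ℝ)+1) * bp m k t) MeasureTheory.volume 0 1 :=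
    ((continuous_const.mul (bp_continuous m k)).continuousOn).intervalIntegrable
  have hftc := intervalIntegral.integral_eq_sub_of_hasDerivAt (fun t _ => hQd t) hInt
  have hQ1 : Q 1 = 1 := by
    rw [hQ]
    simp only [bp_at_one]
    have h5 : ∀ i : ℕ, (if k+(i+1) = m+1 then (1:ℝ) else 0) = if i = m-k then 1 else 0 := by
      intro i
      by_cases h : i = m - k
      · subst h
        have : k + (m-k+1) = m+1 := by omega
        simp [this]
      · have : ¬ (k + (i+1) = m+1) := by omega
        simp [h, this]
    rw [Finset.sum_congr rfl fun i _ => h5 i, Finset.sum_ite_eq' (Finset.range (m+1-k)) (m-k)]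
    have : m - k ∈ Finset.range (m+1-k) := Finset.mem_range.2 (by omega)
    simp [this]
  have hQ0 : Q 0 = 0 := by
    rw [hQ]
    simp only [bp_at_zero]
    refine Finset.sum_eq_zero fun i _ => ?_
    have : ¬ (k + (i+1) = 0) := by omega
    simp [this]
  rw [intervalIntegral.integral_const_mul, hQ1, hQ0] at hftc
  have hm1 : ((m:ℝ)+1) ≠ 0 := by positivity
  field_simp at hftc ⊢
  linarith

lemma bp_pascal {n k : ℕ} (hk1 : 1 ≤ k) (hk2 : k ≤ n - 1) (hn : 2 ≤ n) (x : ℝ) :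
    bp n k x = (1-x) * bp (n-1) k x + x * bp (n-1) (k-1) x := by
  obtain ⟨m, rfl⟩ : ∃ m, n = m + 2 := ⟨n - 2, by omega⟩
  obtain ⟨j, rfl⟩ : ∃ j, k = j + 1 := ⟨k - 1, by omega⟩
  have hc : (m+2).choose (j+1) = (m+1).choose j + (m+1).choose (j+1) := by
    have := Nat.choose_succ_succ (m+1) j
    simpa using this
  simp only [bp]
  have e1 : m + 2 - (j+1) = (m+1) - j := by omega
  have e2 : j + 1 - 1 = j := by omega
  have e3 : m + 2 - 1 = m + 1 := by omega
  have e4 : m + 1 - j = (m - j) + 1 := by omega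
  rw [e1, e2, e3, hc, e4]
  have e5 : m + 1 - (j+1) = m - j := by omega
  rw [e5]
  push_cast
  ring

section moduli

variable {f : ℝ → ℝ} {M δ : ℝ}

lemma omega1_bdd (hM : ∀ u ∈ Icc (0:ℝ) 1, |f u| ≤ M) :
    BddAbove {y | ∃ s t : ℝ, s ∈ Icc (0:ℝ) 1 ∧ t ∈ Icc (0:ℝ) 1 ∧ |s - t| ≤ δ ∧ y = |f s - f t|} := by
  refine ⟨2*M, ?_⟩
  rintro y ⟨s, t, hs, ht, _, rfl⟩
  have := hM s hs; have := hM t ht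
  have := abs_sub (f s) (f t)
  calc |f s - f t| ≤ |f s| + |f t| := abs_sub _ _
    _ ≤ 2*M := by linarith

lemma le_omega1 (hM : ∀ u ∈ Icc (0:ℝ) 1, |f u| ≤ M) {s t : ℝ}
    (hs : s ∈ Icc (0:ℝ) 1) (ht : t ∈ Icc (0:ℝ) 1) (hst : |s - t| ≤ δ) :
    |f s - f t| ≤ omega1 f δ :=
  le_csSup (omega1_bdd hM) ⟨s, t, hs, ht, hst, rfl⟩

lemma omega1_nonneg (hM : ∀ u ∈ Icc (0:ℝ) 1, |f u| ≤ M) (hδ : 0 ≤ δ) :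
    0 ≤ omega1 f δ := by
  have h := le_omega1 (δ := δ) hM (s := 0) (t := 0) (by simp) (by simp) (by simpa using hδ)
  exact le_trans (abs_nonneg _) h

lemma omega2_bdd (hM : ∀ u ∈ Icc (0:ℝ) 1, |f u| ≤ M) :
    BddAbove {y | ∃ t h : ℝ, 0 < h ∧ h ≤ δ ∧ t - h ∈ Icc (0:ℝ) 1 ∧ t + h ∈ Icc (0:ℝ) 1 ∧
      y = |f (t + h) - 2 * f t + f (t - h)|} := by
  refine ⟨4*M, ?_⟩
  rintro y ⟨t, h, hh, _, h1, h2, rfl⟩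
  have ht : t ∈ Icc (0:ℝ) 1 := by
    constructor
    · have := h1.1; linarith
    · have := h2.2; linarith
  have a1 := hM _ h1; have a2 := hM _ h2; have a3 := hM _ ht
  calc |f (t+h) - 2*f t + f (t-h)| ≤ |f (t+h) - 2*f t| + |f (t-h)| := abs_add_le _ _
    _ ≤ |f (t+h)| + |2*f t| + |f (t-h)| := by
        have := abs_sub (f (t+h)) (2*f t); linarith
    _ ≤ 4*M := by rw [abs_mul]; simp only [abs_two]; linarith

lemma le_omega2 (hM : ∀ u ∈ Icc (0:ℝ) 1, |f u| ≤ M) {t h : ℝ}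
    (hh : 0 < h) (hhδ : h ≤ δ) (h1 : t - h ∈ Icc (0:ℝ) 1) (h2 : t + h ∈ Icc (0:ℝ) 1) :
    |f (t + h) - 2 * f t + f (t - h)| ≤ omega2 f δ :=
  le_csSup (omega2_bdd hM) ⟨t, h, hh, hhδ, h1, h2, rfl⟩

lemma omega2_nonneg (hM : ∀ u ∈ Icc (0:ℝ) 1, |f u| ≤ M) (hδ : 0 < δ) :
    0 ≤ omega2 f δ := by
  have hm : 0 < min δ (1/2:ℝ) := lt_min hδ (by norm_num)
  have hm2 : min δ (1/2:ℝ) ≤ 1/2 := min_le_right _ _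
  have h1 : (1:ℝ)/2 - min δ (1/2) ∈ Icc (0:ℝ) 1 := ⟨by linarith, by linarith⟩
  have h2 : (1:ℝ)/2 + min δ (1/2) ∈ Icc (0:ℝ) 1 := ⟨by linarith, by linarith⟩
  have h := le_omega2 (δ := δ) hM (t := 1/2) hm (min_le_left _ _) h1 h2
  exact le_trans (abs_nonneg _) h

lemma interp_err (hf : ContinuousOn f (Icc 0 1)) (hM : ∀ u ∈ Icc (0:ℝ) 1, |f u| ≤ M)
    {a ℓ : ℝ} (ha : 0 ≤ a) (hb : a + ℓ ≤ 1) (hℓ : 0 < ℓ) (hℓδ : ℓ ≤ δ)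
    {t : ℝ} (ht : t ∈ Icc a (a+ℓ)) :
    |f t - (f a + (f (a+ℓ) - f a) * ((t - a)/ℓ))| ≤ omega2 f δ := by
  have hδ : 0 < δ := lt_of_lt_of_le hℓ hℓδ
  have hω : 0 ≤ omega2 f δ := omega2_nonneg hM hδ
  set φ : ℝ → ℝ := fun s => f s - (f a + (f (a+ℓ) - f a) * ((s - a)/ℓ)) with hφ
  have hsub : Icc a (a+ℓ) ⊆ Icc (0:ℝ) 1 := Icc_subset_Icc ha hb
  have hφc : ContinuousOn (fun s => |φ s|) (Icc a (a+ℓ)) := by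
    apply ContinuousOn.abs
    apply ContinuousOn.sub (hf.mono hsub)
    fun_prop
  have hne : (Icc a (a+ℓ)).Nonempty := ⟨a, by constructor <;> linarith⟩
  have hcomp : IsCompact ((fun s => |φ s|) '' Icc a (a+ℓ)) :=
    (isCompact_Icc).image_of_continuousOn hφc
  have hbdd : BddAbove ((fun s => |φ s|) '' Icc a (a+ℓ)) := hcomp.bddAbove
  set K := sSup ((fun s => |φ s|) '' Icc a (a+ℓ)) with hK
  have hKle : ∀ s ∈ Icc a (a+ℓ), |φ s| ≤ K := fun s hs => le_csSup hbdd ⟨s, hs, rfl⟩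
  have hφa : φ a = 0 := by simp [hφ]
  have hφb : φ (a+ℓ) = 0 := by
    have hℓ0 : ℓ ≠ 0 := ne_of_gt hℓ
    simp only [hφ]
    rw [add_sub_cancel_left, div_self hℓ0]; ring
  have hK0 : 0 ≤ K := le_trans (abs_nonneg _) (hKle a ⟨le_refl a, by linarith⟩)
  have ha1 : a ≤ 1 := by linarith
  have key : ∀ s ∈ Icc a (a+ℓ), |φ s| ≤ K/2 + (omega2 f δ)/2 := by
    intro s hs
    rcases le_or_gt s (a + ℓ/2) with hsl | hsr
    · rcases eq_or_lt_of_le hs.1 with rfl | hsa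
      · rw [hφa]; simp; linarith
      · set u := 2*s - a with hu
        have hu_mem : u ∈ Icc a (a+ℓ) := by
          constructor
          · simp only [hu]; linarith
          · simp only [hu]; linarith
        have hstep : 0 < s - a := by linarith
        have hstepδ : s - a ≤ δ := by linarith
        have hkey_eq : φ s = (1/2)*φ u - (1/2)*(f u - 2*f s + f a) := by
          simp only [hφ, hu]
          field_simp
          ring
        have e1 : s + (s - a) = u := by rw [hu]; ring
        have e2 : s - (s - a) = a := by ring
        have hsd' : |f u - 2*f s + f a| ≤ omega2 f δ := by
          have hm1 : s - (s-a) ∈ Icc (0:ℝ) 1 := by rw [e2]; exact ⟨ha, ha1⟩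
          have hm2 : s + (s-a) ∈ Icc (0:ℝ) 1 := by rw [e1]; exact hsub hu_mem
          have hsd := le_omega2 hM hstep hstepδ hm1 hm2
          rwa [e1, e2] at hsd
        calc |φ s| ≤ (1/2)*|φ u| + (1/2)*|f u - 2*f s + f a| := by
              rw [hkey_eq]
              have := abs_sub ((1/2)*φ u) ((1/2)*(f u - 2*f s + f a))
              rw [abs_mul, abs_mul] at this
              have habs : |(1/2 : ℝ)| = 1/2 := by norm_num
              rw [habs] at this
              simpa using this
          _ ≤ K/2 + (omega2 f δ)/2 := by
              have := hKle u hu_mem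
              nlinarith [hsd']
    · rcases eq_or_lt_of_le hs.2 with hsb | hsb
      · rw [hsb, hφb]; simp; linarith
      · set u := 2*s - (a+ℓ) with hu
        have hu_mem : u ∈ Icc a (a+ℓ) := by
          constructor
          · simp only [hu]; linarith
          · simp only [hu]; linarith
        have hstep : 0 < (a+ℓ) - s := by linarith
        have hstepδ : (a+ℓ) - s ≤ δ := by linarith
        have hkey_eq : φ s = (1/2)*φ u - (1/2)*(f u - 2*f s + f (a+ℓ)) := by
          simp only [hφ, hu]
          field_simp
          ring
        have e1 : s + ((a+ℓ) - s) = a+ℓ := by ring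
        have e2 : s - ((a+ℓ) - s) = u := by rw [hu]; ring
        have hsd' : |f u - 2*f s + f (a+ℓ)| ≤ omega2 f δ := by
          have hm1 : s - ((a+ℓ)-s) ∈ Icc (0:ℝ) 1 := by rw [e2]; exact hsub hu_mem
          have hm2 : s + ((a+ℓ)-s) ∈ Icc (0:ℝ) 1 := by rw [e1]; exact ⟨by linarith, hb⟩
          have hsd := le_omega2 hM hstep hstepδ hm1 hm2
          rw [e1, e2] at hsd
          have heq3 : |f (a+ℓ) - 2*f s + f u| = |f u - 2*f s + f (a+ℓ)| := by
            rw [show f (a+ℓ) - 2*f s + f u = f u - 2*f s + f (a+ℓ) by ring]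
          rwa [heq3] at hsd
        calc |φ s| ≤ (1/2)*|φ u| + (1/2)*|f u - 2*f s + f (a+ℓ)| := by
              rw [hkey_eq]
              have := abs_sub ((1/2)*φ u) ((1/2)*(f u - 2*f s + f (a+ℓ)))
              rw [abs_mul, abs_mul] at this
              have habs : |(1/2 : ℝ)| = 1/2 := by norm_num
              rw [habs] at this
              simpa using this
          _ ≤ K/2 + (omega2 f δ)/2 := by
              have := hKle u hu_mem
              nlinarith [hsd']
  have hKK : K ≤ K/2 + (omega2 f δ)/2 := by
    rw [hK]
    apply csSup_le (hne.image _)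
    rintro y ⟨s, hs, rfl⟩
    exact key s hs
  have hKω : K ≤ omega2 f δ := by linarith
  exact le_trans (hKle t ht) hKω

end moduli

noncomputable def pl (f : ℝ → ℝ) (N i : ℕ) (t : ℝ) : ℝ :=
  f ((i:ℝ)/N) + (f (((i:ℝ)+1)/N) - f ((i:ℝ)/N)) * N * (t - (i:ℝ)/N)

lemma pl_hasDerivAt (f : ℝ → ℝ) (N i : ℕ) (t : ℝ) :
    HasDerivAt (pl f N i) ((f (((i:ℝ)+1)/N) - f ((i:ℝ)/N)) * N) t := by
  have h1 : HasDerivAt (fun t : ℝ => t - (i:ℝ)/N) 1 t := (hasDerivAt_id t).sub_const _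
  have h2 : HasDerivAt (pl f N i) (((f (((i:ℝ)+1)/N) - f ((i:ℝ)/N)) * N) * 1) t :=
    (h1.const_mul ((f (((i:ℝ)+1)/N) - f ((i:ℝ)/N)) * N)).const_add (f ((i:ℝ)/N))
  rw [mul_one] at h2; exact h2

lemma pl_continuous (f : ℝ → ℝ) (N i : ℕ) : Continuous (pl f N i) := by
  unfold pl; fun_prop

lemma pl_left (f : ℝ → ℝ) (N i : ℕ) : pl f N i ((i:ℝ)/N) = f ((i:ℝ)/N) := by
  simp [pl]

lemma pl_right (f : ℝ → ℝ) (N i : ℕ) (hN : 0 < N) :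
    pl f N i (((i:ℝ)+1)/N) = f (((i:ℝ)+1)/N) := by
  have hN0 : (N:ℝ) ≠ 0 := Nat.cast_ne_zero.2 hN.ne'
  unfold pl
  field_simp
  ring

lemma ftc_piece (m j : ℕ) (f : ℝ → ℝ) (N i : ℕ) (hN : 0 < N) :
    (∫ t in ((i:ℝ)/N)..(((i:ℝ)+1)/N),
      (((m:ℝ)+1) * (bpz m ((j:ℤ)-1) t - bp m j t) * pl f N i t
        + bp (m+1) j t * ((f (((i:ℝ)+1)/N) - f ((i:ℝ)/N)) * N)))
    = bp (m+1) j (((i:ℝ)+1)/N) * f (((i:ℝ)+1)/N) - bp (m+1) j ((i:ℝ)/N) * f ((i:ℝ)/N) := by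
  have hd : ∀ t : ℝ, HasDerivAt (fun t => bp (m+1) j t * pl f N i t)
      (((m:ℝ)+1) * (bpz m ((j:ℤ)-1) t - bp m j t) * pl f N i t
        + bp (m+1) j t * ((f (((i:ℝ)+1)/N) - f ((i:ℝ)/N)) * N)) t := by
    intro t
    exact (bp_hasDerivAt m j t).mul (pl_hasDerivAt f N i t)
  have hInt : IntervalIntegrable (fun t =>
      ((m:ℝ)+1) * (bpz m ((j:ℤ)-1) t - bp m j t) * pl f N i t
        + bp (m+1) j t * ((f (((i:ℝ)+1)/N) - f ((i:ℝ)/N)) * N))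
      MeasureTheory.volume ((i:ℝ)/N) (((i:ℝ)+1)/N) := by
    apply Continuous.intervalIntegrable
    exact ((continuous_const.mul ((bpz_continuous m _).sub (bp_continuous m j))).mul
      (pl_continuous f N i)).add ((bp_continuous (m+1) j).mul continuous_const)
  have := intervalIntegral.integral_eq_sub_of_hasDerivAt (fun t _ => hd t) hInt
  rw [this, pl_left, pl_right f N i hN]

lemma ftc_sum (m j : ℕ) (f : ℝ → ℝ) (N : ℕ) (hN : 0 < N) :
    ((m:ℝ)+1) * ((∑ i ∈ Finset.range N, ∫ t in ((i:ℝ)/N)..(((i:ℝ)+1)/N),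
        bpz m ((j:ℤ)-1) t * pl f N i t)
      - (∑ i ∈ Finset.range N, ∫ t in ((i:ℝ)/N)..(((i:ℝ)+1)/N), bp m j t * pl f N i t))
    + ∑ i ∈ Finset.range N, ((f (((i:ℝ)+1)/N) - f ((i:ℝ)/N)) * N)
        * ∫ t in ((i:ℝ)/N)..(((i:ℝ)+1)/N), bp (m+1) j t
    = bp (m+1) j 1 * f 1 - bp (m+1) j 0 * f 0 := by
  have hN0 : (N:ℝ) ≠ 0 := Nat.cast_ne_zero.2 hN.ne'
  have key : ∀ i : ℕ,
      ((m:ℝ)+1) * ((∫ t in ((i:ℝ)/N)..(((i:ℝ)+1)/N), bpz m ((j:ℤ)-1) t * pl f N i t)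
        - ∫ t in ((i:ℝ)/N)..(((i:ℝ)+1)/N), bp m j t * pl f N i t)
      + ((f (((i:ℝ)+1)/N) - f ((i:ℝ)/N)) * N) * ∫ t in ((i:ℝ)/N)..(((i:ℝ)+1)/N), bp (m+1) j t
      = bp (m+1) j (((i:ℝ)+1)/N) * f (((i:ℝ)+1)/N) - bp (m+1) j ((i:ℝ)/N) * f ((i:ℝ)/N) := by
    intro i
    have h := ftc_piece m j f N i hN
    have hsplit : (∫ t in ((i:ℝ)/N)..(((i:ℝ)+1)/N),
        (((m:ℝ)+1) * (bpz m ((j:ℤ)-1) t - bp m j t) * pl f N i t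
          + bp (m+1) j t * ((f (((i:ℝ)+1)/N) - f ((i:ℝ)/N)) * N)))
        = ((m:ℝ)+1) * ((∫ t in ((i:ℝ)/N)..(((i:ℝ)+1)/N), bpz m ((j:ℤ)-1) t * pl f N i t)
            - ∫ t in ((i:ℝ)/N)..(((i:ℝ)+1)/N), bp m j t * pl f N i t)
          + ((f (((i:ℝ)+1)/N) - f ((i:ℝ)/N)) * N)
            * ∫ t in ((i:ℝ)/N)..(((i:ℝ)+1)/N), bp (m+1) j t := by
      have i1 : IntervalIntegrable (fun t => ((m:ℝ)+1) * (bpz m ((j:ℤ)-1) t - bp m j t) * pl f N i t)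
          MeasureTheory.volume ((i:ℝ)/N) (((i:ℝ)+1)/N) :=
        ((continuous_const.mul ((bpz_continuous m _).sub (bp_continuous m j))).mul
          (pl_continuous f N i)).intervalIntegrable _ _
      have i2 : IntervalIntegrable (fun t => bp (m+1) j t * ((f (((i:ℝ)+1)/N) - f ((i:ℝ)/N)) * N))
          MeasureTheory.volume ((i:ℝ)/N) (((i:ℝ)+1)/N) :=
        ((bp_continuous (m+1) j).mul continuous_const).intervalIntegrable _ _
      rw [intervalIntegral.integral_add i1 i2]
      congr 1
      · have : (fun t => ((m:ℝ)+1) * (bpz m ((j:ℤ)-1) t - bp m j t) * pl f N i t)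
            = fun t => ((m:ℝ)+1) * ((bpz m ((j:ℤ)-1) t * pl f N i t) - (bp m j t * pl f N i t)) := by
          funext t; ring
        rw [this, intervalIntegral.integral_const_mul]
        congr 1
        rw [intervalIntegral.integral_sub (f := fun t => bpz m ((j:ℤ)-1) t * pl f N i t)
          (g := fun t => bp m j t * pl f N i t)
          (((bpz_continuous m _).mul (pl_continuous f N i)).intervalIntegrable _ _)
          (((bp_continuous m j).mul (pl_continuous f N i)).intervalIntegrable _ _)]
      · rw [intervalIntegral.integral_mul_const]
        ring
    rw [← hsplit, h]
  have hsum := Finset.sum_congr rfl (fun i (_ : i ∈ Finset.range N) => key i)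
  rw [Finset.sum_add_distrib] at hsum
  rw [← Finset.mul_sum] at hsum
  rw [← Finset.sum_sub_distrib, hsum]
  have htel := Finset.sum_range_sub (fun i => bp (m+1) j ((i:ℝ)/N) * f ((i:ℝ)/N)) N
  have hcast : ∀ i : ℕ, (((i:ℕ)+1 : ℕ):ℝ)/N = ((i:ℝ)+1)/N := by intro i; push_cast; ring
  rw [Finset.sum_congr rfl fun i (_ : i ∈ Finset.range N) => by rw [← hcast i]]
  rw [htel, div_self hN0]
  norm_num

noncomputable def Vv (f : ℝ → ℝ) (m jj : ℕ) : ℝ :=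
  if jj = 0 then f 0 else if jj = m+2 then f 1 else
    ((m:ℝ)+1) * ∫ t in (0:ℝ)..1, bp m (jj-1) t * f t

noncomputable def Ww (f : ℝ → ℝ) (m N jj : ℕ) : ℝ :=
  if jj = 0 then f 0 else if jj = m+2 then f 1 else
    ((m:ℝ)+1) * ∑ i ∈ Finset.range N,
      ∫ t in ((i:ℝ)/N)..(((i:ℝ)+1)/N), bp m (jj-1) t * pl f N i t

lemma W_diff (m : ℕ) {j : ℕ} (hj : j ≤ m+1) (f : ℝ → ℝ) {N : ℕ} (hN : 0 < N) :
    Ww f m N (j+1) - Ww f m N j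
      = ∑ i ∈ Finset.range N, ((f (((i:ℝ)+1)/N) - f ((i:ℝ)/N)) * N)
          * ∫ t in ((i:ℝ)/N)..(((i:ℝ)+1)/N), bp (m+1) j t := by
  have h := ftc_sum m j f N hN
  by_cases hj0 : j = 0
  · subst hj0
    have hz : (∑ i ∈ Finset.range N, ∫ t in ((i:ℝ)/N)..(((i:ℝ)+1)/N),
        bpz m (((0:ℕ):ℤ)-1) t * pl f N i t) = 0 := by
      refine Finset.sum_eq_zero fun i _ => ?_
      have : ∀ t : ℝ, bpz m (((0:ℕ):ℤ)-1) t * pl f N i t = 0 := by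
        intro t; simp [bpz]
      simp only [this, intervalIntegral.integral_zero]
    rw [hz] at h
    rw [bp_at_one, bp_at_zero] at h
    simp only [Nat.zero_eq, if_neg (by omega : ¬ (0 = m+1)), if_pos rfl] at h
    norm_num at h
    have hW1 : Ww f m N 1 = ((m:ℝ)+1) * ∑ i ∈ Finset.range N,
        ∫ t in ((i:ℝ)/N)..(((i:ℝ)+1)/N), bp m 0 t * pl f N i t := by
      unfold Ww
      simp
    have hW0 : Ww f m N 0 = f 0 := by unfold Ww; simp
    rw [hW1, hW0]
    linarith
  · by_cases hjm : j = m+1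
    · subst hjm
      have hz1 : (∑ i ∈ Finset.range N, ∫ t in ((i:ℝ)/N)..(((i:ℝ)+1)/N),
          bpz m (((m+1:ℕ):ℤ)-1) t * pl f N i t)
          = ∑ i ∈ Finset.range N, ∫ t in ((i:ℝ)/N)..(((i:ℝ)+1)/N), bp m m t * pl f N i t := by
        refine Finset.sum_congr rfl fun i _ => ?_
        rw [bpz_coe_sub_one m (m+1) (by omega)]
        norm_num
      have hz2 : (∑ i ∈ Finset.range N, ∫ t in ((i:ℝ)/N)..(((i:ℝ)+1)/N),
          bp m (m+1) t * pl f N i t) = 0 := by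
        refine Finset.sum_eq_zero fun i _ => ?_
        have : ∀ t : ℝ, bp m (m+1) t * pl f N i t = 0 := by
          intro t; rw [bp_zero_of_lt (by omega)]; ring
        simp only [this, intervalIntegral.integral_zero]
      rw [hz1, hz2] at h
      rw [bp_at_one, bp_at_zero] at h
      simp only [if_pos rfl, if_neg (by omega : ¬ (m+1 = 0))] at h
      norm_num at h
      have hW2 : Ww f m N (m+1+1) = f 1 := by
        have he : m+1+1 = m+2 := by omega
        rw [he]
        unfold Ww
        simp
      have hW1 : Ww f m N (m+1) = ((m:ℝ)+1) * ∑ i ∈ Finset.range N,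
          ∫ t in ((i:ℝ)/N)..(((i:ℝ)+1)/N), bp m m t * pl f N i t := by
        unfold Ww
        simp only [if_neg (by omega : ¬ (m+1 = 0)), if_neg (by omega : ¬ (m+1 = m+2)),
          Nat.add_sub_cancel]
      rw [hW2, hW1]
      linarith
    · have hj1 : 1 ≤ j := by omega
      have hjm' : j ≤ m := by omega
      have hz1 : (∑ i ∈ Finset.range N, ∫ t in ((i:ℝ)/N)..(((i:ℝ)+1)/N),
          bpz m ((j:ℤ)-1) t * pl f N i t)
          = ∑ i ∈ Finset.range N, ∫ t in ((i:ℝ)/N)..(((i:ℝ)+1)/N), bp m (j-1) t * pl f N i t := by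
        refine Finset.sum_congr rfl fun i _ => ?_
        rw [bpz_coe_sub_one m j hj1]
      rw [hz1] at h
      rw [bp_at_one, bp_at_zero] at h
      simp only [if_neg (by omega : ¬ (j = m+1)), if_neg hj0] at h
      have hW2 : Ww f m N (j+1) = ((m:ℝ)+1) * ∑ i ∈ Finset.range N,
          ∫ t in ((i:ℝ)/N)..(((i:ℝ)+1)/N), bp m j t * pl f N i t := by
        unfold Ww
        simp only [if_neg (by omega : ¬ (j+1 = 0)), if_neg (by omega : ¬ (j+1 = m+2)),
          Nat.add_sub_cancel]
      have hW1 : Ww f m N j = ((m:ℝ)+1) * ∑ i ∈ Finset.range N,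
          ∫ t in ((i:ℝ)/N)..(((i:ℝ)+1)/N), bp m (j-1) t * pl f N i t := by
        unfold Ww
        simp only [if_neg hj0, if_neg (by omega : ¬ (j = m+2))]
      rw [hW2, hW1]
      linarith

lemma piece_subset {N i : ℕ} (hN : 0 < N) (hi : i < N) :
    Icc ((i:ℝ)/N) (((i:ℝ)+1)/N) ⊆ Icc (0:ℝ) 1 := by
  have hN0 : (0:ℝ) < N := by exact_mod_cast hN
  apply Icc_subset_Icc
  · positivity
  · rw [div_le_one hN0]
    have : (i:ℝ)+1 ≤ N := by exact_mod_cast hi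
    linarith

lemma piece_le {N i : ℕ} (hN : 0 < N) : ((i:ℝ)/N) ≤ ((i:ℝ)+1)/N := by
  have hN0 : (0:ℝ) < N := by exact_mod_cast hN
  exact (div_le_div_iff_of_pos_right hN0).2 (by linarith)

lemma piece_uIcc {N i : ℕ} (hN : 0 < N) (hi : i < N) :
    Set.uIcc ((i:ℝ)/N) (((i:ℝ)+1)/N) ⊆ Icc (0:ℝ) 1 := by
  rw [Set.uIcc_of_le (piece_le hN)]
  exact piece_subset hN hi

lemma sum_integral_split (m k N : ℕ) (hN : 0 < N) (g : ℝ → ℝ) (hg : ContinuousOn g (Icc 0 1)) :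
    (∫ t in (0:ℝ)..1, bp m k t * g t)
      = ∑ i ∈ Finset.range N, ∫ t in ((i:ℝ)/N)..(((i:ℝ)+1)/N), bp m k t * g t := by
  have hN0 : (N:ℝ) ≠ 0 := Nat.cast_ne_zero.2 hN.ne'
  have hcast : ∀ i : ℕ, (((i+1 : ℕ)):ℝ)/N = ((i:ℝ)+1)/N := by intro i; push_cast; ring
  have hint : ∀ i < N, IntervalIntegrable (fun t => bp m k t * g t) MeasureTheory.volume
      ((fun i : ℕ => (i:ℝ)/N) i) ((fun i : ℕ => (i:ℝ)/N) (i+1)) := by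
    intro i hi
    simp only [hcast i]
    exact bp_intervalIntegrable m k _ _ g (hg.mono (piece_uIcc hN hi))
  have h := intervalIntegral.sum_integral_adjacent_intervals (μ := MeasureTheory.volume)
    (a := fun i : ℕ => (i:ℝ)/N) (n := N) hint
  have h0 : ((0:ℕ):ℝ)/N = 0 := by norm_num
  have h1 : ((N:ℕ):ℝ)/N = 1 := div_self hN0
  rw [h0, h1] at h
  rw [← h]
  exact Finset.sum_congr rfl fun i _ => by rw [hcast i]

lemma VW_bound {f : ℝ → ℝ} {M δ : ℝ} (hf : ContinuousOn f (Icc 0 1))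
    (hM : ∀ u ∈ Icc (0:ℝ) 1, |f u| ≤ M) (m : ℕ) {jj : ℕ} (hjj : jj ≤ m+2)
    {N : ℕ} (hN : 0 < N) (hNδ : 1/(N:ℝ) ≤ δ) :
    |Vv f m jj - Ww f m N jj| ≤ omega2 f δ := by
  have hN0 : (0:ℝ) < N := by exact_mod_cast hN
  have hδ : 0 < δ := lt_of_lt_of_le (by positivity) hNδ
  have hω : 0 ≤ omega2 f δ := omega2_nonneg hM hδ
  by_cases hjj0 : jj = 0
  · subst hjj0; unfold Vv Ww; simp [hω]
  by_cases hjjn : jj = m+2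
  · subst hjjn; unfold Vv Ww; simp [hω]
  -- middle case
  have hk : jj - 1 ≤ m := by omega
  set k := jj - 1 with hkdef
  have hsplit := sum_integral_split m k N hN f hf
  have hVv : Vv f m jj = ((m:ℝ)+1) * ∑ i ∈ Finset.range N,
      ∫ t in ((i:ℝ)/N)..(((i:ℝ)+1)/N), bp m k t * f t := by
    unfold Vv
    rw [if_neg hjj0, if_neg hjjn, hsplit]
  have hWw : Ww f m N jj = ((m:ℝ)+1) * ∑ i ∈ Finset.range N,
      ∫ t in ((i:ℝ)/N)..(((i:ℝ)+1)/N), bp m k t * pl f N i t := by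
    unfold Ww
    rw [if_neg hjj0, if_neg hjjn]
  rw [hVv, hWw, ← mul_sub, ← Finset.sum_sub_distrib]
  -- per piece bound
  have hpiece : ∀ i ∈ Finset.range N,
      |(∫ t in ((i:ℝ)/N)..(((i:ℝ)+1)/N), bp m k t * f t)
        - ∫ t in ((i:ℝ)/N)..(((i:ℝ)+1)/N), bp m k t * pl f N i t|
      ≤ omega2 f δ * ∫ t in ((i:ℝ)/N)..(((i:ℝ)+1)/N), bp m k t := by
    intro i hi
    rw [Finset.mem_range] at hi
    have hIf : IntervalIntegrable (fun t => bp m k t * f t) MeasureTheory.volume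
        ((i:ℝ)/N) (((i:ℝ)+1)/N) := bp_intervalIntegrable m k _ _ f (hf.mono (piece_uIcc hN hi))
    have hIp : IntervalIntegrable (fun t => bp m k t * pl f N i t) MeasureTheory.volume
        ((i:ℝ)/N) (((i:ℝ)+1)/N) := bp_intervalIntegrable m k _ _ _ (pl_continuous f N i).continuousOn
    rw [← intervalIntegral.integral_sub hIf hIp]
    have habs := intervalIntegral.abs_integral_le_integral_abs (μ := MeasureTheory.volume)
      (f := fun t => bp m k t * f t - bp m k t * pl f N i t)
      (a := (i:ℝ)/N) (b := ((i:ℝ)+1)/N) (piece_le hN)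
    refine le_trans habs ?_
    have hintabs : IntervalIntegrable (fun t => |bp m k t * f t - bp m k t * pl f N i t|)
        MeasureTheory.volume ((i:ℝ)/N) (((i:ℝ)+1)/N) := by
      apply ContinuousOn.intervalIntegrable
      apply ContinuousOn.abs
      apply ContinuousOn.sub
      · exact ((bp_continuous m k).continuousOn).mul (hf.mono (piece_uIcc hN hi))
      · exact ((bp_continuous m k).continuousOn).mul (pl_continuous f N i).continuousOn
    have hintrhs : IntervalIntegrable (fun t => omega2 f δ * bp m k t)
        MeasureTheory.volume ((i:ℝ)/N) (((i:ℝ)+1)/N) :=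
      (continuous_const.mul (bp_continuous m k)).intervalIntegrable _ _
    have hmono := intervalIntegral.integral_mono_on (μ := MeasureTheory.volume)
      (piece_le hN) hintabs hintrhs ?_
    · refine le_trans hmono ?_
      rw [intervalIntegral.integral_const_mul]
    · -- pointwise bound
      intro t ht
      have ht01 : t ∈ Icc (0:ℝ) 1 := piece_subset hN hi ht
      have hbpn : 0 ≤ bp m k t := bp_nonneg ht01.1 ht01.2
      have herr : |f t - pl f N i t| ≤ omega2 f δ := by
        have ha0 : 0 ≤ (i:ℝ)/N := by positivity
        have hb1 : (i:ℝ)/N + 1/N ≤ 1 := by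
          have : ((i:ℝ)+1)/N ≤ 1 := ((piece_subset hN hi) (right_mem_Icc.2 (piece_le hN))).2
          rw [← add_div] at *
          linarith [this]
        have hl : (0:ℝ) < 1/N := by positivity
        have ht' : t ∈ Icc ((i:ℝ)/N) ((i:ℝ)/N + 1/N) := by
          rw [← add_div]
          exact ht
        have herr0 := interp_err hf hM ha0 hb1 hl hNδ ht'
        have heq : f ((i:ℝ)/N) + (f ((i:ℝ)/N + 1/N) - f ((i:ℝ)/N)) * ((t - (i:ℝ)/N)/(1/N))
            = pl f N i t := by
          rw [← add_div]
          unfold pl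
          rw [div_div_eq_mul_div, div_one]
          ring
        rw [heq] at herr0
        exact herr0
      calc |bp m k t * f t - bp m k t * pl f N i t| = bp m k t * |f t - pl f N i t| := by
            rw [← mul_sub, abs_mul, abs_of_nonneg hbpn]
        _ ≤ omega2 f δ * bp m k t := by
            rw [mul_comm]
            exact mul_le_mul_of_nonneg_right herr hbpn
  -- combine
  have habs2 : |((m:ℝ)+1) * ∑ i ∈ Finset.range N,
      ((∫ t in ((i:ℝ)/N)..(((i:ℝ)+1)/N), bp m k t * f t)
        - ∫ t in ((i:ℝ)/N)..(((i:ℝ)+1)/N), bp m k t * pl f N i t)|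
      ≤ ((m:ℝ)+1) * (omega2 f δ * ∑ i ∈ Finset.range N,
          ∫ t in ((i:ℝ)/N)..(((i:ℝ)+1)/N), bp m k t) := by
    rw [abs_mul, abs_of_nonneg (by positivity : (0:ℝ) ≤ (m:ℝ)+1)]
    apply mul_le_mul_of_nonneg_left _ (by positivity : (0:ℝ) ≤ (m:ℝ)+1)
    calc |∑ i ∈ Finset.range N, ((∫ t in ((i:ℝ)/N)..(((i:ℝ)+1)/N), bp m k t * f t)
          - ∫ t in ((i:ℝ)/N)..(((i:ℝ)+1)/N), bp m k t * pl f N i t)|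
        ≤ ∑ i ∈ Finset.range N, |(∫ t in ((i:ℝ)/N)..(((i:ℝ)+1)/N), bp m k t * f t)
          - ∫ t in ((i:ℝ)/N)..(((i:ℝ)+1)/N), bp m k t * pl f N i t| :=
          Finset.abs_sum_le_sum_abs _ _
      _ ≤ ∑ i ∈ Finset.range N, omega2 f δ * ∫ t in ((i:ℝ)/N)..(((i:ℝ)+1)/N), bp m k t :=
          Finset.sum_le_sum hpiece
      _ = omega2 f δ * ∑ i ∈ Finset.range N, ∫ t in ((i:ℝ)/N)..(((i:ℝ)+1)/N), bp m k t := by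
          rw [Finset.mul_sum]
  refine le_trans habs2 ?_
  have hsum_bp : (∑ i ∈ Finset.range N, ∫ t in ((i:ℝ)/N)..(((i:ℝ)+1)/N), bp m k t)
      = 1/((m:ℝ)+1) := by
    have h2 := sum_integral_split m k N hN (fun _ => 1) continuousOn_const
    simp only [mul_one] at h2
    rw [← h2, bp_integral hk]
  rw [hsum_bp]
  have hm1 : (0:ℝ) < (m:ℝ)+1 := by positivity
  rw [mul_comm (omega2 f δ)]
  rw [← mul_assoc]
  rw [mul_one_div, div_self (ne_of_gt hm1), one_mul]

lemma Wdiff_bound {f : ℝ → ℝ} (m : ℕ) {j : ℕ} (hj : j ≤ m+1) {N : ℕ} (hN : 0 < N)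
    {L : ℝ} (hL : ∀ i, i < N → |f (((i:ℝ)+1)/N) - f ((i:ℝ)/N)| * N ≤ L) :
    |Ww f m N (j+1) - Ww f m N j| ≤ L / ((m:ℝ)+2) := by
  rw [W_diff m hj f hN]
  have hbp_nonneg : ∀ i : ℕ, i < N → 0 ≤ ∫ t in ((i:ℝ)/N)..(((i:ℝ)+1)/N), bp (m+1) j t := by
    intro i hi
    apply intervalIntegral.integral_nonneg (piece_le hN)
    intro u hu
    have := piece_subset hN hi hu
    exact bp_nonneg this.1 this.2
  calc |∑ i ∈ Finset.range N, ((f (((i:ℝ)+1)/N) - f ((i:ℝ)/N)) * N)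
        * ∫ t in ((i:ℝ)/N)..(((i:ℝ)+1)/N), bp (m+1) j t|
      ≤ ∑ i ∈ Finset.range N, |((f (((i:ℝ)+1)/N) - f ((i:ℝ)/N)) * N)
        * ∫ t in ((i:ℝ)/N)..(((i:ℝ)+1)/N), bp (m+1) j t| := Finset.abs_sum_le_sum_abs _ _
    _ ≤ ∑ i ∈ Finset.range N, L * ∫ t in ((i:ℝ)/N)..(((i:ℝ)+1)/N), bp (m+1) j t := by
        apply Finset.sum_le_sum
        intro i hi
        rw [Finset.mem_range] at hi
        rw [abs_mul, abs_of_nonneg (hbp_nonneg i hi), abs_mul,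
          abs_of_nonneg (by positivity : (0:ℝ) ≤ (N:ℝ))]
        exact mul_le_mul_of_nonneg_right (hL i hi) (hbp_nonneg i hi)
    _ = L * ∑ i ∈ Finset.range N, ∫ t in ((i:ℝ)/N)..(((i:ℝ)+1)/N), bp (m+1) j t := by
        rw [Finset.mul_sum]
    _ = L / ((m:ℝ)+2) := by
        have h2 := sum_integral_split (m+1) j N hN (fun _ => 1) continuousOn_const
        simp only [mul_one] at h2
        rw [← h2, bp_integral (by omega : j ≤ m+1)]
        push_cast
        ring

lemma bp_zero_idx (m : ℕ) (x : ℝ) : bp m 0 x = (1-x)^m := by simp [bp]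

lemma bp_top_idx (m : ℕ) (x : ℝ) : bp m m x = x^m := by simp [bp]

lemma sum_Icc_one (m : ℕ) (g : ℕ → ℝ) :
    ∑ k ∈ Finset.Icc 1 (m+1), g k = ∑ j ∈ Finset.range (m+1), g (j+1) := by
  induction m with
  | zero => simp
  | succ p ih =>
      rw [Finset.sum_range_succ, ← ih, Finset.sum_Icc_succ_top (by omega : 1 ≤ p+1+1)]

lemma bpM1_sub (m k : ℕ) (hk1 : 1 ≤ k) (hk2 : k ≤ m+1) (a0 a1 : ℝ) (ha : 2*a0 + a1 = 1)
    (x : ℝ) :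
    bpM1 a0 a1 (m+2) k x - bp (m+2) k x
      = ((1+a1)*(1/2-x)) * (bp (m+1) (k-1) x - bp (m+1) k x) := by
  unfold bpM1
  have e3 : m + 2 - 1 = m + 1 := by omega
  rw [bp_pascal (n := m+2) (k := k) hk1 (by omega) (by omega) x]
  rw [e3]
  rw [bpz_coe_sub_one (m+1) k hk1]
  have ha0 : a0 = (1-a1)/2 := by linarith
  rw [ha0]
  ring

lemma key_identity (m : ℕ) (a0 a1 : ℝ) (ha : 2*a0 + a1 = 1) (f : ℝ → ℝ) (x : ℝ) :
    GenM1 a0 a1 (m+2) f x - Gen (m+2) f x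
      = ((1+a1)*(1/2 - x)) * ∑ j ∈ Finset.range (m+2), bp (m+1) j x
          * (Vv f m (j+1) - Vv f m j) := by
  have e1 : m + 2 - 1 = m + 1 := by omega
  have e2 : m + 2 - 2 = m := by omega
  set c := (1+a1)*(1/2-x) with hc
  set F : ℕ → ℝ := fun k => ∫ t in (0:ℝ)..1, bp m (k-1) t * f t with hF
  have hFk : ∀ k : ℕ, (∫ t in (0:ℝ)..1, bp m (k-1) t * f t) = F k := fun k => rfl
  have hVmid : ∀ j ∈ Finset.range (m+1), Vv f m (j+1) = ((m:ℝ)+1) * F (j+1) := by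
    intro j hj
    rw [Finset.mem_range] at hj
    unfold Vv
    rw [if_neg (by omega), if_neg (by omega)]
  have hV0 : Vv f m 0 = f 0 := by unfold Vv; simp
  have hVn : Vv f m (m+2) = f 1 := by unfold Vv; simp
  have hGenM1 : GenM1 a0 a1 (m+2) f x - Gen (m+2) f x
      = ((a1*x+a0) - (1-x)) * (1-x)^(m+1) * f 0
        + ((a1*(1-x)+a0) - x) * x^(m+1) * f 1
        + ((m:ℝ)+1) * ∑ k ∈ Finset.Icc 1 (m+1),
            (bpM1 a0 a1 (m+2) k x - bp (m+2) k x) * F k := by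
    unfold GenM1 Gen
    rw [e1, e2]
    have hcast : ((m+2:ℕ):ℝ) - 1 = (m:ℝ)+1 := by push_cast; ring
    rw [hcast]
    simp only [hFk]
    have hdiff : (∑ k ∈ Finset.Icc 1 (m+1), (bpM1 a0 a1 (m+2) k x - bp (m+2) k x) * F k)
        = (∑ k ∈ Finset.Icc 1 (m+1), bpM1 a0 a1 (m+2) k x * F k)
          - ∑ k ∈ Finset.Icc 1 (m+1), bp (m+2) k x * F k := by
      rw [← Finset.sum_sub_distrib]
      exact Finset.sum_congr rfl fun k _ => by ring
    rw [hdiff]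
    ring
  rw [hGenM1]
  have hsum1 : (∑ k ∈ Finset.Icc 1 (m+1), (bpM1 a0 a1 (m+2) k x - bp (m+2) k x) * F k)
      = ∑ j ∈ Finset.range (m+1), c * ((bp (m+1) j x - bp (m+1) (j+1) x) * F (j+1)) := by
    rw [sum_Icc_one m (fun k => (bpM1 a0 a1 (m+2) k x - bp (m+2) k x) * F k)]
    refine Finset.sum_congr rfl fun j hj => ?_
    rw [Finset.mem_range] at hj
    rw [bpM1_sub m (j+1) (by omega) (by omega) a0 a1 ha x]
    rw [Nat.add_sub_cancel, hc]
    ring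
  rw [hsum1]
  have hrhs : (∑ j ∈ Finset.range (m+2), bp (m+1) j x * (Vv f m (j+1) - Vv f m j))
      = bp (m+1) (m+1) x * Vv f m (m+2) - bp (m+1) 0 x * Vv f m 0
        + ∑ j ∈ Finset.range (m+1), (bp (m+1) j x - bp (m+1) (j+1) x) * Vv f m (j+1) := by
    have hs1 : (∑ j ∈ Finset.range (m+2), bp (m+1) j x * (Vv f m (j+1) - Vv f m j))
        = (∑ j ∈ Finset.range (m+2), bp (m+1) j x * Vv f m (j+1))
          - ∑ j ∈ Finset.range (m+2), bp (m+1) j x * Vv f m j := by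
      rw [← Finset.sum_sub_distrib]
      exact Finset.sum_congr rfl fun j _ => by ring
    rw [hs1]
    rw [Finset.sum_range_succ (fun j => bp (m+1) j x * Vv f m (j+1)) (m+1)]
    rw [Finset.sum_range_succ' (fun j => bp (m+1) j x * Vv f m j) (m+1)]
    have hdiff2 : (∑ j ∈ Finset.range (m+1), (bp (m+1) j x - bp (m+1) (j+1) x) * Vv f m (j+1))
        = (∑ j ∈ Finset.range (m+1), bp (m+1) j x * Vv f m (j+1))
          - ∑ j ∈ Finset.range (m+1), bp (m+1) (j+1) x * Vv f m (j+1) := by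
      rw [← Finset.sum_sub_distrib]
      exact Finset.sum_congr rfl fun j _ => by ring
    rw [hdiff2]
    have e4 : m + 1 + 1 = m + 2 := by omega
    rw [e4]
    ring
  rw [hrhs, hV0, hVn, bp_zero_idx, bp_top_idx]
  have hVsum : (∑ j ∈ Finset.range (m+1), (bp (m+1) j x - bp (m+1) (j+1) x) * Vv f m (j+1))
      = ∑ j ∈ Finset.range (m+1), (bp (m+1) j x - bp (m+1) (j+1) x) * (((m:ℝ)+1) * F (j+1)) :=
    Finset.sum_congr rfl fun j hj => by rw [hVmid j hj]
  rw [hVsum]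
  have hLs : ((m:ℝ)+1) * (∑ j ∈ Finset.range (m+1), c * ((bp (m+1) j x - bp (m+1) (j+1) x) * F (j+1)))
      = c * ∑ j ∈ Finset.range (m+1), ((bp (m+1) j x - bp (m+1) (j+1) x) * (((m:ℝ)+1) * F (j+1))) := by
    rw [Finset.mul_sum, Finset.mul_sum]
    exact Finset.sum_congr rfl fun j _ => by ring
  rw [hLs]
  have ha0 : a0 = (1-a1)/2 := by linarith
  rw [hc, ha0]
  ring

set_option maxHeartbeats 1000000 in
/-- pointwise estimate for the modified genuine Bernstein–Durrmeyer
operator `U_n^{M,1}`. -/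
theorem stmt16 (n : ℕ) (hn : 2 ≤ n) (a0 a1 : ℝ) (ha : 2 * a0 + a1 = 1)
    (f : ℝ → ℝ) (hf : ContinuousOn f (Icc 0 1)) (x : ℝ) (hx : x ∈ Icc (0:ℝ) 1)
    (σ : ℝ)
    (hσ : σ = (2 * (n : ℝ) * x * (1 - x) + (1 - 2 * x) ^ 2) * ((n : ℝ) - 1) /
      (2 * (n : ℝ) ^ 2 * ((n : ℝ) + 1))) :
    σ ≤ 1 / (4 * (n : ℝ)) ∧
    |GenM1 a0 a1 n f x - f x| ≤
      |Gen n f x - f x| + |(1 + a1) * (1 / 2 - x)| *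
        (3 * omega2 f (Real.sqrt σ)
          + 5 / ((n : ℝ) * Real.sqrt σ) * omega1 f (Real.sqrt σ)) := by
  obtain ⟨m, rfl⟩ : ∃ m, n = m + 2 := ⟨n - 2, by omega⟩
  have hnR : ((m+2:ℕ):ℝ) = (m:ℝ)+2 := by push_cast; ring
  have hx0 := hx.1
  have hx1 := hx.2
  have hX0 : 0 ≤ x*(1-x) := mul_nonneg hx0 (by linarith)
  have hX4 : x*(1-x) ≤ 1/4 := by nlinarith [sq_nonneg (1-2*x)]
  have hmR : (2:ℝ) ≤ (m:ℝ)+2 := by linarith [Nat.cast_nonneg (α := ℝ) m]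
  have hstuff_pos : (0:ℝ) < 2*((m:ℝ)+2)*x*(1-x) + (1-2*x)^2 := by nlinarith
  have hstuff_le : 2*((m:ℝ)+2)*x*(1-x) + (1-2*x)^2 ≤ ((m:ℝ)+2)/2 := by
    nlinarith [mul_le_mul_of_nonneg_left hX4 (show (0:ℝ) ≤ 2*((m:ℝ)+2) - 4 by nlinarith)]
  have hden : (0:ℝ) < 2*((m:ℝ)+2)^2*(((m:ℝ)+2)+1) := by positivity
  have hσpos : 0 < σ := by
    rw [hσ, hnR]
    apply div_pos _ hden
    nlinarith
  have hσle : σ ≤ 1 / (4 * ((m+2:ℕ):ℝ)) := by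
    rw [hσ, hnR]
    rw [div_le_div_iff₀ hden (by positivity)]
    nlinarith [mul_le_mul_of_nonneg_right hstuff_le
      (show (0:ℝ) ≤ (((m:ℝ)+2)-1)*(4*((m:ℝ)+2)) by nlinarith)]
  refine ⟨hσle, ?_⟩
  -- setup
  set h := Real.sqrt σ with hh_def
  have hh : 0 < h := Real.sqrt_pos.2 hσpos
  have hσ1 : σ ≤ 1 := by
    have : (1:ℝ) / (4 * ((m+2:ℕ):ℝ)) ≤ 1 := by
      rw [hnR]
      rw [div_le_one (by positivity)]
      nlinarith
    linarith
  have hh1 : h ≤ 1 := by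
    rw [hh_def, show (1:ℝ) = Real.sqrt 1 by simp]
    exact Real.sqrt_le_sqrt hσ1
  set N := ⌈1/h⌉₊ with hN_def
  have hN : 0 < N := Nat.ceil_pos.2 (by positivity)
  have hNR : (0:ℝ) < N := by exact_mod_cast hN
  have hNge : 1/h ≤ (N:ℝ) := Nat.le_ceil _
  have hNh : 1/(N:ℝ) ≤ h := by
    rw [div_le_iff₀ hNR]
    rw [div_le_iff₀ hh] at hNge
    linarith
  have hN2 : (N:ℝ) ≤ 2/h := by
    have hceil : (N:ℝ) < 1/h + 1 := Nat.ceil_lt_add_one (by positivity)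
    have h1h : (1:ℝ) ≤ 1/h := by
      rw [le_div_iff₀ hh]; linarith
    have : 1/h + 1 ≤ 2/h := by
      have : (2:ℝ)/h = 1/h + 1/h := by ring
      linarith
    linarith
  -- bound M
  obtain ⟨M, hM'⟩ := (isCompact_Icc (a := (0:ℝ)) (b := 1)).exists_bound_of_continuousOn hf
  have hM : ∀ u ∈ Icc (0:ℝ) 1, |f u| ≤ M := by
    intro u hu
    have := hM' u hu
    rwa [Real.norm_eq_abs] at this
  have hω1 : 0 ≤ omega1 f h := omega1_nonneg hM (le_of_lt hh)
  have hω2 : 0 ≤ omega2 f h := omega2_nonneg hM hh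
  -- Lipschitz bound
  set L := 2/h * omega1 f h with hL_def
  have hL : ∀ i, i < N → |f (((i:ℝ)+1)/N) - f ((i:ℝ)/N)| * N ≤ L := by
    intro i hi
    have hmem1 : ((i:ℝ)+1)/N ∈ Icc (0:ℝ) 1 := piece_subset hN hi (right_mem_Icc.2 (piece_le hN))
    have hmem2 : ((i:ℝ))/N ∈ Icc (0:ℝ) 1 := piece_subset hN hi (left_mem_Icc.2 (piece_le hN))
    have hdist : |((i:ℝ)+1)/N - (i:ℝ)/N| ≤ h := by
      have : ((i:ℝ)+1)/N - (i:ℝ)/N = 1/N := by field_simp; ring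
      rw [this, abs_of_nonneg (by positivity)]
      exact hNh
    have h1 := le_omega1 hM hmem1 hmem2 hdist
    calc |f (((i:ℝ)+1)/N) - f ((i:ℝ)/N)| * N ≤ omega1 f h * N :=
          mul_le_mul_of_nonneg_right h1 (le_of_lt hNR)
      _ ≤ omega1 f h * (2/h) := mul_le_mul_of_nonneg_left hN2 hω1
      _ = L := by rw [hL_def]; ring
  -- per-j bound
  set K := 2 * omega2 f h + L/((m:ℝ)+2) with hK_def
  have hjbound : ∀ j, j ≤ m+1 → |Vv f m (j+1) - Vv f m j| ≤ K := by
    intro j hj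
    have h1 := VW_bound hf hM m (show j+1 ≤ m+2 by omega) hN hNh
    have h2 := VW_bound hf hM m (show j ≤ m+2 by omega) hN hNh
    have h3 := Wdiff_bound m hj hN hL
    calc |Vv f m (j+1) - Vv f m j|
        = |(Vv f m (j+1) - Ww f m N (j+1)) + (Ww f m N (j+1) - Ww f m N j)
            + (Ww f m N j - Vv f m j)| := by ring_nf
      _ ≤ |Vv f m (j+1) - Ww f m N (j+1)| + |Ww f m N (j+1) - Ww f m N j|
            + |Ww f m N j - Vv f m j| := by
          have t1 := abs_add_le ((Vv f m (j+1) - Ww f m N (j+1)) + (Ww f m N (j+1) - Ww f m N j))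
            (Ww f m N j - Vv f m j)
          have t2 := abs_add_le (Vv f m (j+1) - Ww f m N (j+1)) (Ww f m N (j+1) - Ww f m N j)
          linarith
      _ ≤ omega2 f h + L/((m:ℝ)+2) + omega2 f h := by
          have h2' : |Ww f m N j - Vv f m j| ≤ omega2 f h := by
            rw [abs_sub_comm]; exact h2
          linarith
      _ ≤ K := by rw [hK_def]; linarith
  -- sum bound
  have hGsum : |∑ j ∈ Finset.range (m+2), bp (m+1) j x * (Vv f m (j+1) - Vv f m j)| ≤ K := by
    calc |∑ j ∈ Finset.range (m+2), bp (m+1) j x * (Vv f m (j+1) - Vv f m j)|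
        ≤ ∑ j ∈ Finset.range (m+2), |bp (m+1) j x * (Vv f m (j+1) - Vv f m j)| :=
          Finset.abs_sum_le_sum_abs _ _
      _ ≤ ∑ j ∈ Finset.range (m+2), bp (m+1) j x * K := by
          apply Finset.sum_le_sum
          intro j hj
          rw [Finset.mem_range] at hj
          rw [abs_mul, abs_of_nonneg (bp_nonneg hx0 hx1)]
          exact mul_le_mul_of_nonneg_left (hjbound j (by omega)) (bp_nonneg hx0 hx1)
      _ = K := by
          rw [← Finset.sum_mul]
          have := bp_sum (m+1) x
          rw [show (m+1)+1 = m+2 by omega] at this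
          rw [this, one_mul]
  -- brace bound
  have hbrace : K ≤ 3 * omega2 f h + 5/(((m+2:ℕ):ℝ) * h) * omega1 f h := by
    rw [hK_def, hnR]
    have hhne : h ≠ 0 := ne_of_gt hh
    have hmne : ((m:ℝ)+2) ≠ 0 := by positivity
    have e1 : L / ((m:ℝ)+2) = 2/(((m:ℝ)+2)*h) * omega1 f h := by
      rw [hL_def, div_mul_eq_mul_div, div_div, mul_comm h ((m:ℝ)+2), div_mul_eq_mul_div]
    rw [e1]
    have e2 : 2/(((m:ℝ)+2)*h) * omega1 f h ≤ 5/(((m:ℝ)+2)*h) * omega1 f h := by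
      apply mul_le_mul_of_nonneg_right _ hω1
      exact div_le_div_of_nonneg_right (by norm_num) (by positivity)
    linarith
  -- assembly
  have hkey := key_identity m a0 a1 ha f x
  have htri : |GenM1 a0 a1 (m+2) f x - f x|
      ≤ |Gen (m+2) f x - f x| + |GenM1 a0 a1 (m+2) f x - Gen (m+2) f x| := by
    have := abs_add_le (Gen (m+2) f x - f x) (GenM1 a0 a1 (m+2) f x - Gen (m+2) f x)
    have e : (Gen (m+2) f x - f x) + (GenM1 a0 a1 (m+2) f x - Gen (m+2) f x)
        = GenM1 a0 a1 (m+2) f x - f x := by ring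
    rw [e] at this
    exact this
  have hfinal : |GenM1 a0 a1 (m+2) f x - Gen (m+2) f x|
      ≤ |(1 + a1) * (1 / 2 - x)| * (3 * omega2 f h + 5/(((m+2:ℕ):ℝ) * h) * omega1 f h) := by
    rw [hkey, abs_mul]
    apply mul_le_mul_of_nonneg_left _ (abs_nonneg _)
    exact le_trans hGsum hbrace
  linarith
end

section
/- Let n ≥ 2, let f : [0,1] → ℝ be continuously differentiable, and let x ∈ [0,1]. Then the derivative of the polynomial x ↦ U_n(f;x) satisfies |(U_n f)′(x)| ≤ ‖f′‖_∞. -/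
open scoped BigOperators
open Set Filter MeasureTheory

open intervalIntegral

lemma bp_cont (m j : ℕ) : Continuous (fun x => bp m j x) := by
  unfold bp; continuity

lemma bp_nonneg_s18 (m j : ℕ) {x : ℝ} (hx : x ∈ Icc (0:ℝ) 1) : 0 ≤ bp m j x := by
  have h1 : (0:ℝ) ≤ x := hx.1
  have h2 : (0:ℝ) ≤ 1 - x := by linarith [hx.2]
  unfold bp; positivity

lemma sum_bp (m : ℕ) (x : ℝ) : ∑ j ∈ Finset.range (m+1), bp m j x = 1 := by
  have h := add_pow x (1-x) m
  simp only [add_sub_cancel, one_pow] at h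
  calc ∑ j ∈ Finset.range (m+1), bp m j x
      = ∑ k ∈ Finset.range (m+1), x ^ k * (1-x) ^ (m-k) * (m.choose k : ℝ) := by
        apply Finset.sum_congr rfl; intro k _; unfold bp; ring
    _ = 1 := h.symm

lemma hasDerivAt_one_sub_pow (N : ℕ) (x : ℝ) :
    HasDerivAt (fun y : ℝ => (1-y)^N) (-((N:ℝ) * (1-x)^(N-1))) x := by
  have h := ((hasDerivAt_pow N (1-x)).comp x ((hasDerivAt_id x).const_sub 1))
  simpa [Function.comp_def] using h

lemma hasDerivAt_bp (m j : ℕ) (x : ℝ) :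
    HasDerivAt (fun y => bp (m+1) (j+1) y)
      (((m:ℝ)+1) * (bp m j x - bp m (j+1) x)) x := by
  have h1 : HasDerivAt (fun y : ℝ => ((m+1).choose (j+1) : ℝ) * y^(j+1))
      (((m+1).choose (j+1) : ℝ) * (((j+1:ℕ):ℝ) * x^(j+1-1))) x :=
    (hasDerivAt_pow (j+1) x).const_mul ((m+1).choose (j+1) : ℝ)
  have h2 := hasDerivAt_one_sub_pow (m-j) x
  have h := h1.mul h2
  have hfun : (fun y => bp (m+1) (j+1) y) =
      fun y : ℝ => (((m+1).choose (j+1) : ℝ) * y^(j+1)) * (1-y)^(m-j) := by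
    funext y; unfold bp; rw [Nat.succ_sub_succ]
  rw [hfun]
  refine h.congr_deriv (Eq.symm ?_)
  have A : ((m:ℝ)+1) * (m.choose j : ℝ) = ((m+1).choose (j+1) : ℝ) * ((j:ℝ)+1) := by
    exact_mod_cast congrArg (Nat.cast (R := ℝ)) (Nat.add_one_mul_choose_eq m j)
  have B : ((m:ℝ)+1) * (m.choose (j+1) : ℝ) = ((m+1).choose (j+1) : ℝ) * ((m-j : ℕ) : ℝ) := by
    have : (m+1) * m.choose (j+1) = (m+1).choose (j+1) * (m - j) := by
      rw [Nat.add_one_mul_choose_eq m (j+1), Nat.choose_succ_right_eq (m+1) (j+1)]; congr 1; omega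
    exact_mod_cast congrArg (Nat.cast (R := ℝ)) this
  unfold bp
  simp only [Nat.add_sub_cancel]
  rcases Nat.eq_zero_or_pos (m - j) with hd | hd
  · have hc : m.choose (j+1) = 0 := Nat.choose_eq_zero_of_lt (by omega)
    have hmj2 : m - (j+1) = 0 := by omega
    rw [hd] at B ⊢
    rw [hc, hmj2]
    push_cast
    push_cast at A
    linear_combination (x^j) * A
  · obtain ⟨d, hdd⟩ : ∃ d, m - j = d + 1 := ⟨m - j - 1, by omega⟩
    have hmj1 : m - (j+1) = d := by omega
    have hmjm1 : m - j - 1 = d := by omega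
    rw [hdd] at B ⊢
    rw [hmj1]; simp only [Nat.add_sub_cancel]
    push_cast at A B
    push_cast
    linear_combination (x^j*(1-x)^(d+1)) * A - (x^(j+1)*(1-x)^d) * B

lemma contOn_f {f f' : ℝ → ℝ} (hf : ∀ t ∈ Icc (0:ℝ) 1, HasDerivWithinAt f (f' t) (Icc 0 1) t) :
    ContinuousOn f (Icc (0:ℝ) 1) := fun t ht => (hf t ht).continuousWithinAt

lemma ii_of_contOn {g : ℝ → ℝ} (hg : ContinuousOn g (Icc (0:ℝ) 1)) :
    IntervalIntegrable g volume 0 1 := by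
  apply ContinuousOn.intervalIntegrable
  rwa [uIcc_of_le zero_le_one]

lemma ibp (g g' : ℝ → ℝ) (hg : ∀ t, HasDerivAt g (g' t) t) (hgc : Continuous g)
    (hg' : Continuous g')
    (f f' : ℝ → ℝ) (hf : ∀ t ∈ Icc (0:ℝ) 1, HasDerivWithinAt f (f' t) (Icc 0 1) t)
    (hf' : ContinuousOn f' (Icc 0 1)) :
    ∫ t in (0:ℝ)..1, g' t * f t
      = g 1 * f 1 - g 0 * f 0 - ∫ t in (0:ℝ)..1, g t * f' t := by
  have fc : ContinuousOn f (Icc (0:ℝ) 1) := contOn_f hf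
  have hcont : ContinuousOn (fun t => g t * f t) (Icc (0:ℝ) 1) := hgc.continuousOn.mul fc
  have hderiv : ∀ t ∈ Ioo (0:ℝ) 1,
      HasDerivWithinAt (fun t => g t * f t) (g' t * f t + g t * f' t) (Ioi t) t := by
    intro t ht
    exact ((hg t).hasDerivWithinAt.mul (hf t (Ioo_subset_Icc_self ht))).mono_of_mem_nhdsWithin
      (Icc_mem_nhdsGT_of_mem ⟨ht.1.le, ht.2⟩)
  have i1 : IntervalIntegrable (fun t => g' t * f t) volume 0 1 :=
    ii_of_contOn (hg'.continuousOn.mul fc)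
  have i2 : IntervalIntegrable (fun t => g t * f' t) volume 0 1 :=
    ii_of_contOn (hgc.continuousOn.mul hf')
  have hint : IntervalIntegrable (fun t => g' t * f t + g t * f' t) volume 0 1 := i1.add i2
  have heq := integral_eq_sub_of_hasDeriv_right_of_le zero_le_one hcont hderiv hint
  rw [intervalIntegral.integral_add i1 i2] at heq
  linarith

lemma integral_bp : ∀ (m j : ℕ), j ≤ m → ∫ t in (0:ℝ)..1, bp m j t = 1/((m:ℝ)+1) := by
  intro m j
  induction j with
  | zero =>
    intro _
    have h0 : ∀ t : ℝ, bp m 0 t = (1-t)^m := by intro t; unfold bp; simp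
    simp only [h0]
    have := intervalIntegral.integral_comp_sub_left (fun t : ℝ => t^m) 1 (a := 0) (b := 1)
    simp only [sub_zero, sub_self] at this
    rw [this, integral_pow]
    push_cast; ring
  | succ j ih =>
    intro hj
    have hj' : j ≤ m := by omega
    rw [← ih hj']
    have hint : IntervalIntegrable (fun t => ((m:ℝ)+1) * (bp m j t - bp m (j+1) t)) volume 0 1 :=
      (continuous_const.mul ((bp_cont m j).sub (bp_cont m (j+1)))).intervalIntegrable 0 1
    have heq := integral_eq_sub_of_hasDerivAt (fun t _ => hasDerivAt_bp m j t) hint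
    have e1 : bp (m+1) (j+1) 1 = 0 := by
      unfold bp
      have h : (m+1) - (j+1) ≠ 0 := by omega
      rw [sub_self, zero_pow h]; ring
    have e0 : bp (m+1) (j+1) 0 = 0 := by unfold bp; simp
    rw [e1, e0, sub_self] at heq
    rw [intervalIntegral.integral_const_mul,
      intervalIntegral.integral_sub ((bp_cont m j).intervalIntegrable 0 1)
        ((bp_cont m (j+1)).intervalIntegrable 0 1)] at heq
    have hm : ((m:ℝ)+1) ≠ 0 := by positivity
    have := mul_eq_zero.mp heq
    rcases this with h | h
    · exact absurd h hm
    · linarith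

lemma abs_le_supNorm (f' : ℝ → ℝ) (hf' : ContinuousOn f' (Icc 0 1)) {t : ℝ}
    (ht : t ∈ Icc (0:ℝ) 1) : |f' t| ≤ supNorm f' := by
  have himg : {y | ∃ t ∈ Icc (0:ℝ) 1, y = |f' t|} = (fun t => |f' t|) '' (Icc 0 1) := by
    ext y; constructor
    · rintro ⟨s, hs, rfl⟩; exact ⟨s, hs, rfl⟩
    · rintro ⟨s, hs, rfl⟩; exact ⟨s, hs, rfl⟩
  have hbdd : BddAbove {y | ∃ t ∈ Icc (0:ℝ) 1, y = |f' t|} := by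
    rw [himg]
    exact (isCompact_Icc.image_of_continuousOn hf'.abs).bddAbove
  exact le_csSup hbdd ⟨t, ht, rfl⟩

lemma supNorm_nonneg (f' : ℝ → ℝ) (hf' : ContinuousOn f' (Icc 0 1)) : 0 ≤ supNorm f' :=
  le_trans (abs_nonneg _) (abs_le_supNorm f' hf' (by norm_num : (0:ℝ) ∈ Icc (0:ℝ) 1))

lemma abs_integral_bp_mul_le (m j : ℕ) (hj : j ≤ m) (f' : ℝ → ℝ)
    (hf' : ContinuousOn f' (Icc 0 1)) :
    |∫ t in (0:ℝ)..1, bp m j t * f' t| ≤ supNorm f' / ((m:ℝ)+1) := by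
  have h1 : |∫ t in (0:ℝ)..1, bp m j t * f' t| ≤ ∫ t in (0:ℝ)..1, |bp m j t * f' t| :=
    intervalIntegral.abs_integral_le_integral_abs zero_le_one
  have i1 : IntervalIntegrable (fun t => |bp m j t * f' t|) volume 0 1 :=
    ii_of_contOn (((bp_cont m j).continuousOn.mul hf').abs)
  have i2 : IntervalIntegrable (fun t => bp m j t * supNorm f') volume 0 1 :=
    (((bp_cont m j).mul continuous_const)).intervalIntegrable 0 1
  have h2 : ∫ t in (0:ℝ)..1, |bp m j t * f' t| ≤ ∫ t in (0:ℝ)..1, bp m j t * supNorm f' := by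
    apply intervalIntegral.integral_mono_on zero_le_one i1 i2
    intro t ht
    rw [abs_mul, abs_of_nonneg (bp_nonneg_s18 m j ht)]
    exact mul_le_mul_of_nonneg_left (abs_le_supNorm f' hf' ht) (bp_nonneg_s18 m j ht)
  have h3 : ∫ t in (0:ℝ)..1, bp m j t * supNorm f' = supNorm f' / ((m:ℝ)+1) := by
    rw [intervalIntegral.integral_mul_const, integral_bp m j hj]
    ring
  linarith

lemma abel_sum (m : ℕ) (B v : ℕ → ℝ) :
    ∑ j ∈ Finset.range (m+1), (B j - B (j+1)) * v (j+1)
      = ∑ k ∈ Finset.range (m+2), B k * (v (k+1) - v k)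
        + B 0 * v 0 - B (m+1) * v (m+2) := by
  induction m with
  | zero => simp [Finset.sum_range_succ]; ring
  | succ p ih =>
    rw [Finset.sum_range_succ, ih, show p+1+2 = (p+2)+1 from rfl,
      Finset.sum_range_succ (f := fun k => B k * (v (k+1) - v k)) (n := p+2)]
    ring

/-- bound on the derivative of the genuine Bernstein–Durrmeyer
operator `U_n f`. -/
theorem stmt18 (n : ℕ) (hn : 2 ≤ n) (f f' : ℝ → ℝ)
    (hf : ∀ t ∈ Icc (0:ℝ) 1, HasDerivWithinAt f (f' t) (Icc 0 1) t)
    (hf' : ContinuousOn f' (Icc 0 1)) (x : ℝ) (hx : x ∈ Icc (0:ℝ) 1) :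
    |deriv (fun y => Gen n f y) x| ≤ supNorm f' := by
  obtain ⟨m, rfl⟩ : ∃ m, n = m + 2 := ⟨n - 2, by omega⟩
  have fc : ContinuousOn f (Icc (0:ℝ) 1) := contOn_f hf
  set c : ℕ → ℝ := fun k => ∫ t in (0:ℝ)..1, bp m (k-1) t * f t with hc
  set I : ℕ → ℝ := fun j => ∫ t in (0:ℝ)..1, bp (m+1) j t * f' t with hI
  -- rewrite Gen in range form
  have hGen : (fun y => Gen (m+2) f y) = fun y =>
      (1-y)^(m+2) * f 0 + y^(m+2) * f 1
        + ((m:ℝ)+1) * ∑ j ∈ Finset.range (m+1), bp (m+2) (j+1) y * c (j+1) := by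
    funext y
    unfold Gen
    have h1 : m + 2 - 1 = m + 1 := by omega
    have h2 : m + 2 - 2 = m := by omega
    rw [h1, h2, ← Finset.Ico_add_one_right_eq_Icc, Finset.sum_Ico_eq_sum_range]
    have h3 : m + 1 + 1 - 1 = m + 1 := by omega
    have h4 : (((m+2:ℕ)):ℝ) - 1 = (m:ℝ)+1 := by push_cast; ring
    rw [h3, h4]
    congr 1
    congr 1
    apply Finset.sum_congr rfl
    intro j _
    rw [Nat.add_comm 1 j, hc]
  -- derivative computation
  have hS : HasDerivAt (fun y => ∑ j ∈ Finset.range (m+1), bp (m+2) (j+1) y * c (j+1))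
      (∑ j ∈ Finset.range (m+1),
        ((((m+1:ℕ):ℝ)+1) * (bp (m+1) j x - bp (m+1) (j+1) x)) * c (j+1)) x := by
    apply HasDerivAt.fun_sum
    intro j _
    exact (hasDerivAt_bp (m+1) j x).mul_const (c (j+1))
  have hA := (hasDerivAt_one_sub_pow (m+2) x).mul_const (f 0)
  have hB := (hasDerivAt_pow (m+2) x).mul_const (f 1)
  have hD' := (hA.add hB).add (hS.const_mul ((m:ℝ)+1))
  have hderiv : deriv (fun y => Gen (m+2) f y) x
      = -(((m+2:ℕ):ℝ) * (1-x)^(m+1)) * f 0 + ((m+2:ℕ):ℝ) * x^(m+1) * f 1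
        + ((m:ℝ)+1) * ∑ j ∈ Finset.range (m+1),
            ((((m+1:ℕ):ℝ)+1) * (bp (m+1) j x - bp (m+1) (j+1) x)) * c (j+1) := by
    rw [hGen]
    have := hD'.deriv
    rw [show m+2-1 = m+1 from rfl] at this
    exact this
  -- integration by parts facts
  have hI0 : ((m:ℝ)+1) * c 1 = f 0 + I 0 := by
    have hg : ∀ t : ℝ, HasDerivAt (fun y : ℝ => -(1-y)^(m+1)) (((m:ℝ)+1)*(1-t)^m) t := by
      intro t
      have := (hasDerivAt_one_sub_pow (m+1) t).neg
      simp only [Nat.add_sub_cancel, neg_neg] at this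
      refine this.congr_deriv (Eq.symm ?_)
      push_cast; ring
    have h := ibp _ _ hg (((continuous_const.sub continuous_id').pow (m+1)).neg)
      (continuous_const.mul ((continuous_const.sub continuous_id').pow m)) f f' hf hf'
    simp only [sub_self] at h
    have hz : ((0:ℝ))^(m+1) = 0 := zero_pow (Nat.succ_ne_zero m)
    rw [hz] at h
    have ec : c 1 = ∫ t in (0:ℝ)..1, bp m 0 t * f t := rfl
    have eI : I 0 = ∫ t in (0:ℝ)..1, bp (m+1) 0 t * f' t := rfl
    have hL : ∫ t in (0:ℝ)..1, (((m:ℝ)+1)*(1-t)^m) * f t = ((m:ℝ)+1) * c 1 := by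
      rw [ec, ← intervalIntegral.integral_const_mul]
      apply intervalIntegral.integral_congr
      intro t _
      simp [bp]
      ring
    have hR : ∫ t in (0:ℝ)..1, (-(1-t)^(m+1)) * f' t = -I 0 := by
      rw [eI, ← intervalIntegral.integral_neg]
      apply intervalIntegral.integral_congr
      intro t _
      simp [bp]
    rw [hL, hR] at h
    rw [h]; ring
  have hIm : ((m:ℝ)+1) * c (m+1) = f 1 - I (m+1) := by
    have hg : ∀ t : ℝ, HasDerivAt (fun y : ℝ => y^(m+1)) (((m:ℝ)+1)*t^m) t := by
      intro t
      have := hasDerivAt_pow (m+1) t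
      simp only [Nat.add_sub_cancel] at this
      refine this.congr_deriv (Eq.symm ?_)
      push_cast; ring
    have h := ibp _ _ hg (continuous_pow (m+1))
      (continuous_const.mul (continuous_pow m)) f f' hf hf'
    have hz : ((0:ℝ))^(m+1) = 0 := zero_pow (Nat.succ_ne_zero m)
    rw [hz, one_pow] at h
    have ec : c (m+1) = ∫ t in (0:ℝ)..1, bp m m t * f t := rfl
    have eI : I (m+1) = ∫ t in (0:ℝ)..1, bp (m+1) (m+1) t * f' t := rfl
    have hL : ∫ t in (0:ℝ)..1, (((m:ℝ)+1)*t^m) * f t = ((m:ℝ)+1) * c (m+1) := by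
      rw [ec, ← intervalIntegral.integral_const_mul]
      apply intervalIntegral.integral_congr
      intro t _
      simp [bp]
      ring
    have hR : ∫ t in (0:ℝ)..1, (t : ℝ)^(m+1) * f' t = I (m+1) := by
      rw [eI]
      apply intervalIntegral.integral_congr
      intro t _
      simp [bp]
    rw [hL, hR] at h
    rw [h]; ring
  have hMid : ∀ i : ℕ, i + 1 ≤ m → ((m:ℝ)+1) * (c (i+2) - c (i+1)) = I (i+1) := by
    intro i hi
    have hg := fun t => hasDerivAt_bp m i t
    have h := ibp _ _ hg (bp_cont (m+1) (i+1))
      (by exact (continuous_const.mul ((bp_cont m i).sub (bp_cont m (i+1))))) f f' hf hf'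
    have e1 : bp (m+1) (i+1) 1 = 0 := by
      unfold bp
      have hne : (m+1) - (i+1) ≠ 0 := by omega
      rw [sub_self, zero_pow hne]; ring
    have e0 : bp (m+1) (i+1) 0 = 0 := by unfold bp; simp
    rw [e1, e0] at h
    have ec1 : c (i+1) = ∫ t in (0:ℝ)..1, bp m i t * f t := rfl
    have ec2 : c (i+2) = ∫ t in (0:ℝ)..1, bp m (i+1) t * f t := rfl
    have eI : I (i+1) = ∫ t in (0:ℝ)..1, bp (m+1) (i+1) t * f' t := rfl
    have hL : ∫ t in (0:ℝ)..1, (((m:ℝ)+1) * (bp m i t - bp m (i+1) t)) * f t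
        = ((m:ℝ)+1) * (c (i+1) - c (i+2)) := by
      rw [ec1, ec2,
        ← intervalIntegral.integral_sub (ii_of_contOn (g := fun t => bp m i t * f t) ((bp_cont m i).continuousOn.mul fc))
          (ii_of_contOn (g := fun t => bp m (i+1) t * f t) ((bp_cont m (i+1)).continuousOn.mul fc)),
        ← intervalIntegral.integral_const_mul]
      apply intervalIntegral.integral_congr
      intro t _
      ring
    rw [hL] at h
    rw [eI]
    linarith [h]
  -- the sequence v
  set v : ℕ → ℝ := fun j => if j = 0 then f 0 else if j = m+2 then f 1 else ((m:ℝ)+1) * c j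
    with hv
  have hv0 : v 0 = f 0 := by simp [hv]
  have hvlast : v (m+2) = f 1 := by simp [hv]
  have hvmid : ∀ j, 1 ≤ j → j ≤ m+1 → v j = ((m:ℝ)+1) * c j := by
    intro j h1 h2
    simp only [hv]
    rw [if_neg (by omega), if_neg (by omega)]
  have hvI : ∀ j ∈ Finset.range (m+2), v (j+1) - v j = I j := by
    intro j hj
    rw [Finset.mem_range] at hj
    rcases Nat.eq_zero_or_pos j with rfl | hj1
    · rw [hv0, hvmid 1 (by omega) (by omega)]
      rw [hI0]; ring
    · rcases Nat.lt_or_ge j (m+1) with hjm | hjm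
      · obtain ⟨i, rfl⟩ : ∃ i, j = i + 1 := ⟨j - 1, by omega⟩
        rw [hvmid (i+2) (by omega) (by omega), hvmid (i+1) (by omega) (by omega)]
        rw [← hMid i (by omega)]; ring
      · have : j = m + 1 := by omega
        subst this
        rw [hvlast, hvmid (m+1) (by omega) (by omega), hIm]
        ring
  -- main identity
  have key : deriv (fun y => Gen (m+2) f y) x
      = ((m:ℝ)+2) * ∑ k ∈ Finset.range (m+2), bp (m+1) k x * I k := by
    rw [hderiv]
    have step1 : ∑ j ∈ Finset.range (m+1),
        ((((m+1:ℕ):ℝ)+1) * (bp (m+1) j x - bp (m+1) (j+1) x)) * c (j+1)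
        = (((m:ℝ)+2) / ((m:ℝ)+1)) * ∑ j ∈ Finset.range (m+1),
            (bp (m+1) j x - bp (m+1) (j+1) x) * v (j+1) := by
      rw [Finset.mul_sum]
      apply Finset.sum_congr rfl
      intro j hj
      rw [Finset.mem_range] at hj
      rw [hvmid (j+1) (by omega) (by omega)]
      have hm1 : ((m:ℝ)+1) ≠ 0 := by positivity
      push_cast
      field_simp
      ring
    rw [step1, abel_sum m (fun j => bp (m+1) j x) v]
    have hsum : ∑ k ∈ Finset.range (m+2), bp (m+1) k x * (v (k+1) - v k)
        = ∑ k ∈ Finset.range (m+2), bp (m+1) k x * I k := by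
      apply Finset.sum_congr rfl
      intro k hk
      rw [hvI k hk]
    rw [hsum, hv0, hvlast]
    have hb0 : bp (m+1) 0 x = (1-x)^(m+1) := by simp [bp]
    have hbm : bp (m+1) (m+1) x = x^(m+1) := by simp [bp]
    rw [hb0, hbm]
    have hm1 : ((m:ℝ)+1) ≠ 0 := by positivity
    push_cast
    field_simp
    ring
  -- bound
  rw [key, abs_mul, abs_of_nonneg (by positivity : (0:ℝ) ≤ (m:ℝ)+2)]
  have hMn : 0 ≤ supNorm f' := supNorm_nonneg f' hf'
  have h1 : |∑ k ∈ Finset.range (m+2), bp (m+1) k x * I k|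
      ≤ ∑ k ∈ Finset.range (m+2), bp (m+1) k x * (supNorm f' / ((m:ℝ)+2)) := by
    refine (Finset.abs_sum_le_sum_abs _ _).trans (Finset.sum_le_sum ?_)
    intro k hk
    rw [Finset.mem_range] at hk
    rw [abs_mul, abs_of_nonneg (bp_nonneg_s18 _ _ hx)]
    apply mul_le_mul_of_nonneg_left _ (bp_nonneg_s18 _ _ hx)
    have hb := abs_integral_bp_mul_le (m+1) k (by omega) f' hf'
    have eI : I k = ∫ t in (0:ℝ)..1, bp (m+1) k t * f' t := rfl
    have e2 : ((m+1:ℕ):ℝ)+1 = (m:ℝ)+2 := by push_cast; ring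
    rw [e2] at hb
    rw [eI]
    exact hb
  calc ((m:ℝ)+2) * |∑ k ∈ Finset.range (m+2), bp (m+1) k x * I k|
      ≤ ((m:ℝ)+2) * ∑ k ∈ Finset.range (m+2), bp (m+1) k x * (supNorm f' / ((m:ℝ)+2)) :=
        mul_le_mul_of_nonneg_left h1 (by positivity)
    _ = supNorm f' := by
        rw [← Finset.sum_mul, sum_bp (m+1) x]
        field_simp
end
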